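/- Under Assumptions A, let O⊆V be a set of nodes with An(O)∩O^c=∅. Then j∈O^c satisfies an(j)∩O^c=∅ if and only if for some (equivalently every) a>1: σ²_{M_{i,aj,aO}} − σ²_{M_{i,j,O}} = (a²−1)σ²_{M_{j,O}} for all i∉O∪{j}. If instead an(j)∩O^c≠∅, then σ²_{M_{i,aj,aO}} − σ²_{M_{i,j,O}} ≤ (a²−1)σ²_{M_{j,O}} for all i∉O∪{j}, with strict inequality when i∈O^c∩an(j). -/

import Mathlib

open scoped BigOperators


noncomputable def Sfun {d : ℕ} (A : Fin d → Fin d → ℝ) (O : Finset (Fin d)) (ℓ : Fin d) : ℝ :=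
  ⨆ k, if k ∈ O then (A k ℓ) ^ 2 else 0

lemma biSup_eq {d : ℕ} (A : Fin d → Fin d → ℝ) (O : Finset (Fin d)) (ℓ : Fin d) :
    (⨆ k ∈ O, (A k ℓ) ^ 2) = Sfun A O ℓ := by
  unfold Sfun
  refine iSup_congr fun k => ?_
  by_cases h : k ∈ O
  · simp [h, ciSup_pos]
  · haveI : IsEmpty (k ∈ O) := ⟨h⟩
    simp [h, Real.iSup_of_isEmpty]

lemma biSup_mul {d : ℕ} (A : Fin d → Fin d → ℝ) (O : Finset (Fin d)) (ℓ : Fin d)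
    (c : ℝ) (hc : 0 ≤ c) :
    (⨆ k ∈ O, c * (A k ℓ) ^ 2) = c * Sfun A O ℓ := by
  unfold Sfun
  rw [Real.mul_iSup_of_nonneg hc]
  refine iSup_congr fun k => ?_
  by_cases h : k ∈ O
  · simp [h, ciSup_pos]
  · haveI : IsEmpty (k ∈ O) := ⟨h⟩
    simp [h, Real.iSup_of_isEmpty]

lemma Sfun_nonneg {d : ℕ} (A : Fin d → Fin d → ℝ) (O : Finset (Fin d)) (ℓ : Fin d) :
    0 ≤ Sfun A O ℓ :=
  Real.iSup_nonneg fun k => by by_cases h : k ∈ O <;> simp [h] <;> positivity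

lemma Sfun_le {d : ℕ} (A : Fin d → Fin d → ℝ) (O : Finset (Fin d)) (ℓ k : Fin d)
    (hk : k ∈ O) : (A k ℓ) ^ 2 ≤ Sfun A O ℓ := by
  have := le_ciSup (f := fun k => if k ∈ O then (A k ℓ) ^ 2 else 0)
    (Set.Finite.bddAbove (Set.finite_range _)) k
  simpa [hk, Sfun] using this

lemma Sfun_lt {d : ℕ} (A : Fin d → Fin d → ℝ) (O : Finset (Fin d)) (ℓ : Fin d)
    (x : ℝ) (hx : 0 < x) (h : ∀ k ∈ O, (A k ℓ) ^ 2 < x) : Sfun A O ℓ < x := by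
  haveI : Nonempty (Fin d) := ⟨ℓ⟩
  obtain ⟨k₀, hk₀⟩ := Finite.exists_max (fun k => if k ∈ O then (A k ℓ) ^ 2 else 0)
  have h1 : Sfun A O ℓ ≤ if k₀ ∈ O then (A k₀ ℓ) ^ 2 else 0 := ciSup_le hk₀
  refine h1.trans_lt ?_
  by_cases hk : k₀ ∈ O
  · simpa [hk] using h k₀ hk
  · simpa [hk] using hx

lemma Sfun_eq_zero {d : ℕ} (A : Fin d → Fin d → ℝ) (O : Finset (Fin d)) (ℓ : Fin d)
    (h : ∀ k ∈ O, A k ℓ = 0) : Sfun A O ℓ = 0 := by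
  refine le_antisymm (Real.iSup_le (fun k => ?_) le_rfl) (Sfun_nonneg A O ℓ)
  by_cases hk : k ∈ O
  · simp [hk, h k hk]
  · simp [hk]

lemma pt_le (x B a : ℝ) (hB : 0 ≤ B) (ha : 1 < a) :
    (x ⊔ (a ^ 2 * B)) - (x ⊔ B) ≤ (a ^ 2 - 1) * B := by
  have h1 : 1 ≤ a ^ 2 := by nlinarith
  rcases le_total x B with h | h
  · rw [sup_eq_right.mpr h, sup_eq_right.mpr (h.trans (by nlinarith))]; nlinarith
  · rw [sup_eq_left.mpr h]
    rcases le_total (a ^ 2 * B) x with h2 | h2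
    · rw [sup_eq_left.mpr h2]; nlinarith
    · rw [sup_eq_right.mpr h2]; nlinarith

lemma pt_eq (x B a : ℝ) (hB : 0 ≤ B) (ha : 1 < a) (h : x ≤ B ∨ B = 0) :
    (x ⊔ (a ^ 2 * B)) - (x ⊔ B) = (a ^ 2 - 1) * B := by
  rcases h with h | h
  · rw [sup_eq_right.mpr h, sup_eq_right.mpr (h.trans (by
      nlinarith [mul_nonneg (show (0:ℝ) ≤ a ^ 2 - 1 by nlinarith) hB]))]
    ring
  · subst h; simp

lemma pt_lt (x B a : ℝ) (hB : 0 < B) (hBx : B < x) (ha : 1 < a) :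
    (x ⊔ (a ^ 2 * B)) - (x ⊔ B) < (a ^ 2 - 1) * B := by
  rw [sup_eq_left.mpr hBx.le]
  rcases le_total (a ^ 2 * B) x with h2 | h2
  · rw [sup_eq_left.mpr h2]
    nlinarith [mul_pos (show (0:ℝ) < a ^ 2 - 1 by nlinarith) hB]
  · rw [sup_eq_right.mpr h2]; nlinarith


/-- Under Assumptions A, let O ⊆ V satisfy An(O) ∩ Oᶜ = ∅.
Then j ∈ Oᶜ satisfies an(j) ∩ Oᶜ = ∅ (i.e. an(j) ⊆ O) if and only if for every
(equivalently, some) a > 1: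
σ²_{M_{i,aj,aO}} − σ²_{M_{i,j,O}} = (a²−1)σ²_{M_{j,O}} for all i ∉ O ∪ {j}.
If instead an(j) ∩ Oᶜ ≠ ∅, then ≤ holds for all i ∉ O ∪ {j}, with strict
inequality when i ∈ Oᶜ ∩ an(j). Here
σ²_{M_{i,aj,aO}} = Σ_ℓ (a_{iℓ}² ∨ a²a_{jℓ}² ∨ max_{k∈O} a²a_{kℓ}²) and
σ²_{M_{j,O}} = Σ_ℓ (a_{jℓ}² ∨ max_{k∈O} a_{kℓ}²). -/
theorem ordering_criterion {d : ℕ} (A : Fin d → Fin d → ℝ)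
    (an : Fin d → Finset (Fin d))
    (hnn : ∀ i j, 0 ≤ A i j)
    (hrow : ∀ i, ∑ j, (A i j) ^ 2 = 1)
    (hdiag : ∀ ℓ k, k ≠ ℓ → A k ℓ < A ℓ ℓ)
    (hsupp : ∀ j ℓ, A j ℓ ≠ 0 → ℓ = j ∨ ℓ ∈ an j)
    (hpos : ∀ j ℓ, ℓ ∈ an j → 0 < A j ℓ)
    (hirr : ∀ j, j ∉ an j)
    (htrans : ∀ j ℓ m, ℓ ∈ an j → m ∈ an ℓ → m ∈ an j)
    (O : Finset (Fin d)) (hclosed : ∀ i ∈ O, an i ⊆ O)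
    (j : Fin d) (hjO : j ∉ O) :
    ((an j ⊆ O) ↔ ∀ a : ℝ, 1 < a → ∀ i, i ∉ insert j O →
        (∑ ℓ, ((A i ℓ) ^ 2 ⊔ (a ^ 2 * (A j ℓ) ^ 2) ⊔ (⨆ k ∈ O, a ^ 2 * (A k ℓ) ^ 2)))
          - (∑ ℓ, ((A i ℓ) ^ 2 ⊔ ((A j ℓ) ^ 2) ⊔ (⨆ k ∈ O, (A k ℓ) ^ 2)))
        = (a ^ 2 - 1) * (∑ ℓ, ((A j ℓ) ^ 2 ⊔ (⨆ k ∈ O, (A k ℓ) ^ 2))))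
    ∧ ((an j ⊆ O) ↔ ∃ a : ℝ, 1 < a ∧ ∀ i, i ∉ insert j O →
        (∑ ℓ, ((A i ℓ) ^ 2 ⊔ (a ^ 2 * (A j ℓ) ^ 2) ⊔ (⨆ k ∈ O, a ^ 2 * (A k ℓ) ^ 2)))
          - (∑ ℓ, ((A i ℓ) ^ 2 ⊔ ((A j ℓ) ^ 2) ⊔ (⨆ k ∈ O, (A k ℓ) ^ 2)))
        = (a ^ 2 - 1) * (∑ ℓ, ((A j ℓ) ^ 2 ⊔ (⨆ k ∈ O, (A k ℓ) ^ 2))))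
    ∧ (¬ (an j ⊆ O) → ∀ a : ℝ, 1 < a → ∀ i, i ∉ insert j O →
        ((∑ ℓ, ((A i ℓ) ^ 2 ⊔ (a ^ 2 * (A j ℓ) ^ 2) ⊔ (⨆ k ∈ O, a ^ 2 * (A k ℓ) ^ 2)))
            - (∑ ℓ, ((A i ℓ) ^ 2 ⊔ ((A j ℓ) ^ 2) ⊔ (⨆ k ∈ O, (A k ℓ) ^ 2)))
          ≤ (a ^ 2 - 1) * (∑ ℓ, ((A j ℓ) ^ 2 ⊔ (⨆ k ∈ O, (A k ℓ) ^ 2))))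
        ∧ (i ∈ an j \ O →
          (∑ ℓ, ((A i ℓ) ^ 2 ⊔ (a ^ 2 * (A j ℓ) ^ 2) ⊔ (⨆ k ∈ O, a ^ 2 * (A k ℓ) ^ 2)))
              - (∑ ℓ, ((A i ℓ) ^ 2 ⊔ ((A j ℓ) ^ 2) ⊔ (⨆ k ∈ O, (A k ℓ) ^ 2)))
            < (a ^ 2 - 1) * (∑ ℓ, ((A j ℓ) ^ 2 ⊔ (⨆ k ∈ O, (A k ℓ) ^ 2))))) := by

  have hBnn : ∀ ℓ, (0:ℝ) ≤ (A j ℓ) ^ 2 ⊔ Sfun A O ℓ :=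
    fun ℓ => le_sup_of_le_left (by positivity)
  have hsum3 : (∑ ℓ, ((A j ℓ) ^ 2 ⊔ (⨆ k ∈ O, (A k ℓ) ^ 2)))
      = ∑ ℓ, ((A j ℓ) ^ 2 ⊔ Sfun A O ℓ) :=
    Finset.sum_congr rfl fun ℓ _ => by rw [biSup_eq]
  have hsum2 : ∀ i : Fin d,
      (∑ ℓ, ((A i ℓ) ^ 2 ⊔ ((A j ℓ) ^ 2) ⊔ (⨆ k ∈ O, (A k ℓ) ^ 2)))
        = ∑ ℓ, ((A i ℓ) ^ 2 ⊔ ((A j ℓ) ^ 2 ⊔ Sfun A O ℓ)) :=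
    fun i => Finset.sum_congr rfl fun ℓ _ => by rw [biSup_eq, sup_assoc]
  have hsum1 : ∀ (i : Fin d) (a : ℝ), 1 < a →
      (∑ ℓ, ((A i ℓ) ^ 2 ⊔ (a ^ 2 * (A j ℓ) ^ 2) ⊔ (⨆ k ∈ O, a ^ 2 * (A k ℓ) ^ 2)))
        = ∑ ℓ, ((A i ℓ) ^ 2 ⊔ (a ^ 2 * ((A j ℓ) ^ 2 ⊔ Sfun A O ℓ))) := by
    intro i a ha
    refine Finset.sum_congr rfl fun ℓ _ => ?_
    rw [biSup_mul A O ℓ _ (by positivity), sup_assoc,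
      ← mul_max_of_nonneg _ _ (by positivity : (0:ℝ) ≤ a ^ 2)]
  have hdiff : ∀ (i : Fin d) (a : ℝ), 1 < a →
      (∑ ℓ, ((A i ℓ) ^ 2 ⊔ (a ^ 2 * (A j ℓ) ^ 2) ⊔ (⨆ k ∈ O, a ^ 2 * (A k ℓ) ^ 2)))
        - (∑ ℓ, ((A i ℓ) ^ 2 ⊔ ((A j ℓ) ^ 2) ⊔ (⨆ k ∈ O, (A k ℓ) ^ 2)))
      = ∑ ℓ, (((A i ℓ) ^ 2 ⊔ (a ^ 2 * ((A j ℓ) ^ 2 ⊔ Sfun A O ℓ)))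
          - ((A i ℓ) ^ 2 ⊔ ((A j ℓ) ^ 2 ⊔ Sfun A O ℓ))) := by
    intro i a ha
    rw [hsum1 i a ha, hsum2 i, ← Finset.sum_sub_distrib]
  have hrhs : ∀ a : ℝ,
      (a ^ 2 - 1) * (∑ ℓ, ((A j ℓ) ^ 2 ⊔ (⨆ k ∈ O, (A k ℓ) ^ 2)))
        = ∑ ℓ, (a ^ 2 - 1) * ((A j ℓ) ^ 2 ⊔ Sfun A O ℓ) := by
    intro a; rw [hsum3, Finset.mul_sum]
  -- case analysis for equality when an j ⊆ O
  have hcase : ∀ i : Fin d, i ∉ insert j O → an j ⊆ O → ∀ ℓ : Fin d,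
      (A i ℓ) ^ 2 ≤ (A j ℓ) ^ 2 ⊔ Sfun A O ℓ ∨ ((A j ℓ) ^ 2 ⊔ Sfun A O ℓ) = 0 := by
    intro i hi hsub ℓ
    have hij : i ≠ j := fun h => hi (h ▸ Finset.mem_insert_self j O)
    have hiO : i ∉ O := fun h => hi (Finset.mem_insert_of_mem h)
    by_cases hℓj : ℓ = j
    · subst hℓj
      exact Or.inl (le_sup_of_le_left (pow_le_pow_left₀ (hnn i ℓ) (hdiag ℓ i hij).le 2))
    by_cases hℓO : ℓ ∈ O
    · have hiℓ : i ≠ ℓ := fun h => hiO (h ▸ hℓO)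
      exact Or.inl (le_sup_of_le_right
        ((pow_le_pow_left₀ (hnn i ℓ) (hdiag ℓ i hiℓ).le 2).trans (Sfun_le A O ℓ ℓ hℓO)))
    · right
      have hj0 : A j ℓ = 0 := by
        by_contra h
        rcases hsupp j ℓ h with h1 | h1
        · exact hℓj h1
        · exact hℓO (hsub h1)
      have hS : Sfun A O ℓ = 0 := Sfun_eq_zero A O ℓ (fun k hk => by
        by_contra h
        rcases hsupp k ℓ h with h1 | h1
        · exact hℓO (h1 ▸ hk)
        · exact hℓO (hclosed k hk h1))
      simp [hj0, hS]
  have key_eq : an j ⊆ O → ∀ a : ℝ, 1 < a → ∀ i, i ∉ insert j O →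
      (∑ ℓ, ((A i ℓ) ^ 2 ⊔ (a ^ 2 * (A j ℓ) ^ 2) ⊔ (⨆ k ∈ O, a ^ 2 * (A k ℓ) ^ 2)))
        - (∑ ℓ, ((A i ℓ) ^ 2 ⊔ ((A j ℓ) ^ 2) ⊔ (⨆ k ∈ O, (A k ℓ) ^ 2)))
      = (a ^ 2 - 1) * (∑ ℓ, ((A j ℓ) ^ 2 ⊔ (⨆ k ∈ O, (A k ℓ) ^ 2))) := by
    intro hsub a ha i hi
    rw [hdiff i a ha, hrhs a]
    exact Finset.sum_congr rfl fun ℓ _ =>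
      pt_eq _ _ _ (hBnn ℓ) ha (hcase i hi hsub ℓ)
  have key_le : ∀ a : ℝ, 1 < a → ∀ i : Fin d,
      (∑ ℓ, ((A i ℓ) ^ 2 ⊔ (a ^ 2 * (A j ℓ) ^ 2) ⊔ (⨆ k ∈ O, a ^ 2 * (A k ℓ) ^ 2)))
        - (∑ ℓ, ((A i ℓ) ^ 2 ⊔ ((A j ℓ) ^ 2) ⊔ (⨆ k ∈ O, (A k ℓ) ^ 2)))
      ≤ (a ^ 2 - 1) * (∑ ℓ, ((A j ℓ) ^ 2 ⊔ (⨆ k ∈ O, (A k ℓ) ^ 2))) := by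
    intro a ha i
    rw [hdiff i a ha, hrhs a]
    exact Finset.sum_le_sum fun ℓ _ => pt_le _ _ _ (hBnn ℓ) ha
  have key_lt : ∀ a : ℝ, 1 < a → ∀ i : Fin d, i ∈ an j \ O →
      (∑ ℓ, ((A i ℓ) ^ 2 ⊔ (a ^ 2 * (A j ℓ) ^ 2) ⊔ (⨆ k ∈ O, a ^ 2 * (A k ℓ) ^ 2)))
        - (∑ ℓ, ((A i ℓ) ^ 2 ⊔ ((A j ℓ) ^ 2) ⊔ (⨆ k ∈ O, (A k ℓ) ^ 2)))
      < (a ^ 2 - 1) * (∑ ℓ, ((A j ℓ) ^ 2 ⊔ (⨆ k ∈ O, (A k ℓ) ^ 2))) := by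
    intro a ha i hi
    rw [Finset.mem_sdiff] at hi
    obtain ⟨hian, hiO⟩ := hi
    have hji : j ≠ i := fun h => hirr j (h ▸ hian)
    have hAji : 0 < A j i := hpos j i hian
    have hAii : 0 < A i i := lt_trans hAji (hdiag i j hji)
    have hBpos : 0 < (A j i) ^ 2 ⊔ Sfun A O i :=
      lt_of_lt_of_le (by positivity) le_sup_left
    have hBlt : (A j i) ^ 2 ⊔ Sfun A O i < (A i i) ^ 2 := by
      refine sup_lt_iff.mpr ⟨?_, ?_⟩
      · exact pow_lt_pow_left₀ (hdiag i j hji) (hnn j i) two_ne_zero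
      · refine Sfun_lt A O i _ (by positivity) fun k hk => ?_
        have hki : k ≠ i := fun h => hiO (h ▸ hk)
        exact pow_lt_pow_left₀ (hdiag i k hki) (hnn k i) two_ne_zero
    rw [hdiff i a ha, hrhs a]
    refine Finset.sum_lt_sum (fun ℓ _ => pt_le _ _ _ (hBnn ℓ) ha)
      ⟨i, Finset.mem_univ i, pt_lt _ _ _ hBpos hBlt ha⟩
  have key_conv : (∃ a : ℝ, 1 < a ∧ ∀ i, i ∉ insert j O →
      (∑ ℓ, ((A i ℓ) ^ 2 ⊔ (a ^ 2 * (A j ℓ) ^ 2) ⊔ (⨆ k ∈ O, a ^ 2 * (A k ℓ) ^ 2)))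
        - (∑ ℓ, ((A i ℓ) ^ 2 ⊔ ((A j ℓ) ^ 2) ⊔ (⨆ k ∈ O, (A k ℓ) ^ 2)))
      = (a ^ 2 - 1) * (∑ ℓ, ((A j ℓ) ^ 2 ⊔ (⨆ k ∈ O, (A k ℓ) ^ 2)))) → an j ⊆ O := by
    rintro ⟨a, ha, h⟩ ℓ₀ hℓ₀
    by_contra hO0
    have hne : ℓ₀ ≠ j := fun h => hirr j (h ▸ hℓ₀)
    have hni : ℓ₀ ∉ insert j O := by simp [hne, hO0]
    exact absurd (h ℓ₀ hni)
      (ne_of_lt (key_lt a ha ℓ₀ (Finset.mem_sdiff.mpr ⟨hℓ₀, hO0⟩)))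
  refine ⟨⟨fun h a ha i hi => key_eq h a ha i hi,
      fun h => key_conv ⟨2, one_lt_two, h 2 one_lt_two⟩⟩,
    ⟨fun h => ⟨2, one_lt_two, key_eq h 2 one_lt_two⟩, key_conv⟩,
    fun _ a ha i hi => ⟨key_le a ha i, fun hmem => key_lt a ha i hmem⟩⟩
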